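/- Fix a natural number k. Define, for each natural number d, E₁(d) = ∑_{i=0}^{d} (k + i) 2^{−i} ∏_{j=i+1}^{d} (1 − 2^{−j}) and E₂(d) = ∑_{i=0}^{d} (k + i)² 2^{−i} ∏_{j=i+1}^{d} (1 − 2^{−j}). Then lim_{d→∞} ( E₂(d) − E₁(d)² ) = c₀ + c₁, where c₀ = ∑_{i=1}^{∞} 1/(2^i − 1) and c₁ = ∑_{i=1}^{∞} 1/(2^i − 1)². (This is the limiting variance Var[M_n] of the decoding time of a random binary linear code as the blocklength n grows.) -/

import Mathlib

open Filter Finset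


/-- The Erdős–Borwein constant `c₀ = ∑_{i=1}^{∞} 1/(2^i − 1)`. -/
noncomputable def c₀ : ℝ := ∑' i : ℕ, 1 / ((2 : ℝ) ^ (i + 1) - 1)

/-- The digital search tree constant `c₁ = ∑_{i=1}^{∞} 1/(2^i − 1)²`. -/
noncomputable def c₁ : ℝ := ∑' i : ℕ, 1 / ((2 : ℝ) ^ (i + 1) - 1) ^ 2

/-- First moment `E₁(d) = ∑_{i=0}^{d} (k + i) 2^{−i} ∏_{j=i+1}^{d} (1 − 2^{−j})`. -/
noncomputable def E₁ (k d : ℕ) : ℝ :=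
  ∑ i ∈ Finset.range (d + 1),
    ((k : ℝ) + (i : ℝ)) * (2 : ℝ) ^ (-(i : ℤ)) *
      ∏ j ∈ Finset.Icc (i + 1) d, (1 - (2 : ℝ) ^ (-(j : ℤ)))

/-- Second moment `E₂(d) = ∑_{i=0}^{d} (k + i)² 2^{−i} ∏_{j=i+1}^{d} (1 − 2^{−j})`. -/
noncomputable def E₂ (k d : ℕ) : ℝ :=
  ∑ i ∈ Finset.range (d + 1),
    ((k : ℝ) + (i : ℝ)) ^ 2 * (2 : ℝ) ^ (-(i : ℤ)) *
      ∏ j ∈ Finset.Icc (i + 1) d, (1 - (2 : ℝ) ^ (-(j : ℤ)))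



/-- partial product ∏_{j=i+1}^d (1 - 2^{-j}) -/
noncomputable def Pd (i d : ℕ) : ℝ := ∏ j ∈ Finset.Icc (i+1) d, (1 - (1/2:ℝ)^j)

lemma half_pow_le_one {j : ℕ} : ((1/2:ℝ))^j ≤ 1 := by
  apply pow_le_one₀ <;> norm_num

lemma half_pow_lt_one {j : ℕ} (hj : j ≠ 0) : ((1/2:ℝ))^j < 1 := by
  apply pow_lt_one₀ <;> norm_num; omega

lemma half_pow_pos {j : ℕ} : (0:ℝ) < (1/2)^j := by positivity

lemma Pd_pos (i d : ℕ) : 0 < Pd i d := by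
  apply Finset.prod_pos
  intro j hj
  simp only [Finset.mem_Icc] at hj
  have : ((1/2:ℝ))^j < 1 := half_pow_lt_one (by omega)
  linarith

lemma Pd_le_one (i d : ℕ) : Pd i d ≤ 1 := by
  apply Finset.prod_le_one
  · intro j hj
    have := half_pow_le_one (j := j); linarith
  · intro j hj
    have := half_pow_pos (j := j); linarith

lemma Pd_eq_one_of_le {i d : ℕ} (h : d ≤ i) : Pd i d = 1 := by
  unfold Pd
  rw [Finset.Icc_eq_empty (by omega), Finset.prod_empty]

lemma Pd_succ {i d : ℕ} (h : i ≤ d) : Pd i (d+1) = Pd i d * (1 - (1/2:ℝ)^(d+1)) := by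
  unfold Pd
  rw [← Finset.prod_Icc_succ_top (by omega)]

lemma Pd_antitone (i : ℕ) : Antitone (Pd i) := by
  apply antitone_nat_of_succ_le
  intro d
  by_cases h : i ≤ d
  · rw [Pd_succ h]
    have h1 := Pd_pos i d
    have h2 : ((1/2:ℝ))^(d+1) > 0 := half_pow_pos
    nlinarith
  · push_neg at h
    rw [Pd_eq_one_of_le (by omega : d + 1 ≤ i), Pd_eq_one_of_le (by omega : d ≤ i)]

lemma Pd_ge {i d : ℕ} (h : i ≤ d) : 1 - (1/2:ℝ)^i + (1/2)^d ≤ Pd i d := by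
  induction d with
  | zero =>
    have : i = 0 := by omega
    subst this; rw [Pd_eq_one_of_le le_rfl]; norm_num
  | succ d ih =>
    by_cases hd : i ≤ d
    · rw [Pd_succ hd]
      have h1 := ih hd
      have h2 : (0:ℝ) < (1/2)^d := half_pow_pos
      have h3 : (0:ℝ) < (1/2)^i := half_pow_pos
      have h4 : ((1/2:ℝ))^(d+1) = (1/2)*(1/2)^d := by ring
      have h5 : ((1/2:ℝ))^d ≤ (1/2)^i := pow_le_pow_of_le_one (by norm_num) (by norm_num) hd
      have h6 : (0:ℝ) ≤ 1 - (1/2)^(d+1) := by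
        have := half_pow_le_one (j := d+1); linarith
      nlinarith [mul_le_mul_of_nonneg_right h1 h6, mul_nonneg (sub_nonneg.2 h5) h2.le]
    · have : i = d + 1 := by omega
      subst this
      rw [Pd_eq_one_of_le le_rfl]; norm_num

lemma Pd_ge' (i d : ℕ) : 1 - (1/2:ℝ)^i ≤ Pd i d := by
  by_cases h : i ≤ d
  · have := Pd_ge h
    have : (0:ℝ) < (1/2)^d := half_pow_pos
    have := Pd_ge (i := i) (d := d) ‹i ≤ d›
    linarith
  · rw [Pd_eq_one_of_le (by omega)]
    have : (0:ℝ) < (1/2)^i := half_pow_pos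
    linarith

lemma Pd_split {i d D : ℕ} (h1 : i ≤ d) (h2 : d ≤ D) : Pd i D = Pd i d * Pd d D := by
  unfold Pd
  rw [Finset.Icc_add_one_left_eq_Ioc, Finset.Icc_add_one_left_eq_Ioc, Finset.Icc_add_one_left_eq_Ioc,
    Finset.prod_Ioc_consecutive _ h1 h2]

/-- the infinite product -/
noncomputable def Qinf (i : ℕ) : ℝ := ⨅ d, Pd i d

lemma tendsto_Pd (i : ℕ) : Tendsto (Pd i) atTop (nhds (Qinf i)) := by
  apply tendsto_atTop_ciInf (Pd_antitone i)
  exact ⟨0, fun x hx => by obtain ⟨d, rfl⟩ := hx; exact (Pd_pos i d).le⟩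

lemma Qinf_le_Pd (i d : ℕ) : Qinf i ≤ Pd i d :=
  ciInf_le ⟨0, fun x hx => by obtain ⟨d, rfl⟩ := hx; exact (Pd_pos i d).le⟩ d

lemma Qinf_le_one (i : ℕ) : Qinf i ≤ 1 := (Qinf_le_Pd i 0).trans (Pd_le_one i 0)

lemma Qinf_ge (i : ℕ) : 1 - (1/2:ℝ)^i ≤ Qinf i :=
  le_ciInf (fun d => Pd_ge' i d)

lemma Qinf_mul {i d : ℕ} (h : i ≤ d) : Qinf i = Pd i d * Qinf d := by
  have h1 : Tendsto (fun D => Pd i D) atTop (nhds (Qinf i)) := tendsto_Pd i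
  have h2 : Tendsto (fun D => Pd i d * Pd d D) atTop (nhds (Pd i d * Qinf d)) :=
    (tendsto_Pd d).const_mul _
  have h3 : ∀ᶠ D in atTop, Pd i D = Pd i d * Pd d D := by
    filter_upwards [eventually_ge_atTop d] with D hD
    exact Pd_split h hD
  exact tendsto_nhds_unique (h1.congr' h3) h2

lemma Qinf_rec (i : ℕ) : Qinf i = (1 - (1/2:ℝ)^(i+1)) * Qinf (i+1) := by
  have := Qinf_mul (i := i) (d := i+1) (by omega)
  rwa [show Pd i (i+1) = 1 - (1/2:ℝ)^(i+1) by
    rw [Pd_succ le_rfl, Pd_eq_one_of_le le_rfl, one_mul]] at this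

lemma Qinf_pos (i : ℕ) : 0 < Qinf i := by
  rw [Qinf_rec i]
  have h1 : (1/2:ℝ) ≤ 1 - (1/2:ℝ)^(i+1) := by
    have : ((1/2:ℝ))^(i+1) ≤ (1/2)^1 := pow_le_pow_of_le_one (by norm_num) (by norm_num) (by omega)
    simp at this ⊢; linarith
  have h2 : (1/2:ℝ) ≤ Qinf (i+1) := by
    have := Qinf_ge (i+1)
    have : ((1/2:ℝ))^(i+1) ≤ (1/2)^1 := pow_le_pow_of_le_one (by norm_num) (by norm_num) (by omega)
    have := Qinf_ge (i+1); simp at *; nlinarith [Qinf_ge (i+1),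
      pow_le_pow_of_le_one (by norm_num : (0:ℝ) ≤ 1/2) (by norm_num : (1/2:ℝ) ≤ 1) (by omega : 1 ≤ i+1)]
  nlinarith

noncomputable def uu (i : ℕ) : ℝ := (1/2:ℝ)^i * Qinf i

lemma uu_pos (i : ℕ) : 0 < uu i := mul_pos half_pow_pos (Qinf_pos i)

lemma uu_le (i : ℕ) : uu i ≤ (1/2:ℝ)^i := by
  have h := Qinf_le_one i
  have := half_pow_pos (j := i)
  unfold uu; nlinarith

lemma uu_rec (i : ℕ) : (1 - (1/2:ℝ)^(i+1)) * uu (i+1) = (1/2) * uu i := by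
  unfold uu
  rw [show ((1/2:ℝ))^(i+1) * Qinf (i+1) = (1/2)^(i+1) * Qinf (i+1) from rfl]
  have := Qinf_rec i
  calc (1 - (1/2:ℝ)^(i+1)) * ((1/2)^(i+1) * Qinf (i+1))
      = (1/2)^(i+1) * ((1 - (1/2:ℝ)^(i+1)) * Qinf (i+1)) := by ring
    _ = (1/2)^(i+1) * Qinf i := by rw [← Qinf_rec i]
    _ = (1/2) * ((1/2)^i * Qinf i) := by ring

/-- key per-term recurrence rearranged -/
lemma uu_rec' (i : ℕ) : uu (i+1) = (1/2) * uu i + (1/2:ℝ)^(i+1) * uu (i+1) := by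
  have := uu_rec i; linarith [uu_rec i]

lemma summable_pow_mul_half {s : ℕ} {r : ℝ} (h0 : 0 ≤ r) (h1 : r < 1) :
    Summable (fun j : ℕ => (j:ℝ)^s * r^j) := by
  have := summable_pow_mul_geometric_of_norm_lt_one (R := ℝ) s (r := r)
    (by rw [Real.norm_eq_abs, abs_of_nonneg h0]; exact h1)
  exact this

lemma uu_summable_weight (s : ℕ) (r : ℝ) (h0 : 0 ≤ r) (h1 : r ≤ 1) :
    Summable (fun j : ℕ => (j:ℝ)^s * r^j * uu j) := by
  apply Summable.of_nonneg_of_le (f := fun j : ℕ => (j:ℝ)^s * (1/2:ℝ)^j)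
  · intro j
    exact mul_nonneg (mul_nonneg (by positivity) (pow_nonneg h0 j)) (uu_pos j).le
  · intro j
    have h2 : r^j ≤ 1 := pow_le_one₀ h0 h1
    have h3 := uu_le j
    have h4 : (0:ℝ) ≤ (j:ℝ)^s := by positivity
    have h5 := (uu_pos j).le
    have h6 := half_pow_pos (j := j)
    nlinarith [mul_le_mul_of_nonneg_left h3 h4, mul_nonneg h4 h5]
  · exact summable_pow_mul_half (by norm_num) (by norm_num)

noncomputable def SS (t : ℕ) : ℝ := ∑' j : ℕ, ((1/2:ℝ)^t)^j * uu j
noncomputable def mm (t : ℕ) : ℝ := ∑' j : ℕ, (j:ℝ) * ((1/2:ℝ)^t)^j * uu j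
noncomputable def vv (t : ℕ) : ℝ := ∑' j : ℕ, (j:ℝ)^2 * ((1/2:ℝ)^t)^j * uu j

lemma SS_summable (t : ℕ) : Summable (fun j : ℕ => ((1/2:ℝ)^t)^j * uu j) := by
  have := uu_summable_weight 0 ((1/2:ℝ)^t) (by positivity) half_pow_le_one
  simpa using this

lemma mm_summable (t : ℕ) : Summable (fun j : ℕ => (j:ℝ) * ((1/2:ℝ)^t)^j * uu j) := by
  have := uu_summable_weight 1 ((1/2:ℝ)^t) (by positivity) half_pow_le_one
  simpa [mul_assoc] using this

lemma vv_summable (t : ℕ) : Summable (fun j : ℕ => (j:ℝ)^2 * ((1/2:ℝ)^t)^j * uu j) := by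
  have := uu_summable_weight 2 ((1/2:ℝ)^t) (by positivity) half_pow_le_one
  simpa [mul_assoc] using this

lemma SS_rec (t : ℕ) : SS (t+1) = (1 - (1/2:ℝ)^(t+1)) * SS t := by
  have key : ∀ j : ℕ, ((1/2:ℝ)^t)^(j+1) * uu (j+1)
      = (1/2:ℝ)^(t+1) * (((1/2:ℝ)^t)^j * uu j) + ((1/2:ℝ)^(t+1))^(j+1) * uu (j+1) := by
    intro j
    have h := uu_rec' j
    calc ((1/2:ℝ)^t)^(j+1) * uu (j+1)
        = ((1/2:ℝ)^t)^(j+1) * ((1/2) * uu j + (1/2:ℝ)^(j+1) * uu (j+1)) := by rw [← h]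
      _ = (1/2:ℝ)^(t+1) * (((1/2:ℝ)^t)^j * uu j)
          + ((1/2:ℝ)^t)^(j+1) * (1/2:ℝ)^(j+1) * uu (j+1) := by ring
      _ = _ := by rw [← mul_pow]; ring_nf
  have hS := SS_summable t
  have hS1 := SS_summable (t+1)
  have hsum2 : Summable (fun j => ((1/2:ℝ)^(t+1))^(j+1) * uu (j+1)) := by
    have := hS1.comp_injective (Nat.succ_injective)
    simpa [Function.comp_def] using this
  have e1 : SS t = uu 0 + ∑' j : ℕ, ((1/2:ℝ)^t)^(j+1) * uu (j+1) := by
    have h := Summable.tsum_eq_zero_add hS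
    simp only [pow_zero, one_mul] at h
    exact h
  have e2 : SS (t+1) = uu 0 + ∑' j : ℕ, ((1/2:ℝ)^(t+1))^(j+1) * uu (j+1) := by
    have h := Summable.tsum_eq_zero_add hS1
    simp only [pow_zero, one_mul] at h
    exact h
  have e3 : (∑' j : ℕ, ((1/2:ℝ)^t)^(j+1) * uu (j+1))
      = (1/2:ℝ)^(t+1) * SS t + ∑' j : ℕ, ((1/2:ℝ)^(t+1))^(j+1) * uu (j+1) := by
    rw [show SS t = ∑' j : ℕ, ((1/2:ℝ)^t)^j * uu j from rfl, ← tsum_mul_left,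
      ← Summable.tsum_add (hS.mul_left _) hsum2]
    exact tsum_congr key
  linarith

lemma tsum_shift (f : ℕ → ℝ) (hf : Summable f) (h0 : f 0 = 0) :
    ∑' j, f j = ∑' j, f (j+1) := by
  rw [Summable.tsum_eq_zero_add hf, h0, zero_add]

lemma mm_rec (t : ℕ) : mm t = (1/2:ℝ)^(t+1) * (mm t + SS t) + mm (t+1) := by
  have key : ∀ j : ℕ, ((j:ℝ)+1) * ((1/2:ℝ)^t)^(j+1) * uu (j+1)
      = (1/2:ℝ)^(t+1) * (((j:ℝ)+1) * ((1/2:ℝ)^t)^j * uu j)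
        + ((j:ℝ)+1) * ((1/2:ℝ)^(t+1))^(j+1) * uu (j+1) := by
    intro j
    have h := uu_rec' j
    calc ((j:ℝ)+1) * ((1/2:ℝ)^t)^(j+1) * uu (j+1)
        = ((j:ℝ)+1) * ((1/2:ℝ)^t)^(j+1) * ((1/2) * uu j + (1/2:ℝ)^(j+1) * uu (j+1)) := by
          rw [← h]
      _ = (1/2:ℝ)^(t+1) * (((j:ℝ)+1) * ((1/2:ℝ)^t)^j * uu j)
          + ((j:ℝ)+1) * (((1/2:ℝ)^t)^(j+1) * ((1/2:ℝ)^1)^(j+1)) * uu (j+1) := by ring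
      _ = _ := by rw [← mul_pow, pow_one, ← pow_succ]
  have hm := mm_summable t
  have hm1 := mm_summable (t+1)
  have hS := SS_summable t
  have hw : Summable (fun j : ℕ => ((j:ℝ)+1) * ((1/2:ℝ)^t)^j * uu j) := by
    apply (hm.add hS).congr
    intro j; ring
  have hsum2 : Summable (fun j : ℕ => ((j:ℝ)+1) * ((1/2:ℝ)^(t+1))^(j+1) * uu (j+1)) := by
    have := hm1.comp_injective (Nat.succ_injective)
    apply this.congr
    intro j
    show ((j+1:ℕ):ℝ) * ((1/2:ℝ)^(t+1))^(j+1) * uu (j+1) = _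
    push_cast; ring
  have e1 : mm t = ∑' j : ℕ, ((j:ℝ)+1) * ((1/2:ℝ)^t)^(j+1) * uu (j+1) := by
    rw [show mm t = ∑' j : ℕ, (j:ℝ) * ((1/2:ℝ)^t)^j * uu j from rfl,
      tsum_shift _ hm (by norm_num)]
    apply tsum_congr; intro j; push_cast; ring
  have e2 : mm (t+1) = ∑' j : ℕ, ((j:ℝ)+1) * ((1/2:ℝ)^(t+1))^(j+1) * uu (j+1) := by
    rw [show mm (t+1) = ∑' j : ℕ, (j:ℝ) * ((1/2:ℝ)^(t+1))^j * uu j from rfl,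
      tsum_shift _ hm1 (by norm_num)]
    apply tsum_congr; intro j; push_cast; ring
  have e3 : (∑' j : ℕ, ((j:ℝ)+1) * ((1/2:ℝ)^t)^(j+1) * uu (j+1))
      = (1/2:ℝ)^(t+1) * (mm t + SS t)
        + ∑' j : ℕ, ((j:ℝ)+1) * ((1/2:ℝ)^(t+1))^(j+1) * uu (j+1) := by
    have hmid : (∑' j : ℕ, ((j:ℝ)+1) * ((1/2:ℝ)^t)^j * uu j) = mm t + SS t := by
      rw [show mm t = ∑' j : ℕ, (j:ℝ) * ((1/2:ℝ)^t)^j * uu j from rfl,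
        show SS t = ∑' j : ℕ, ((1/2:ℝ)^t)^j * uu j from rfl,
        ← Summable.tsum_add hm hS]
      apply tsum_congr; intro j; ring
    rw [← hmid, ← tsum_mul_left, ← Summable.tsum_add (hw.mul_left _) hsum2]
    exact tsum_congr key
  have h4 := e1.trans e3
  rw [← e2] at h4
  exact h4

lemma vv_rec (t : ℕ) : vv t = (1/2:ℝ)^(t+1) * (vv t + 2 * mm t + SS t) + vv (t+1) := by
  have key : ∀ j : ℕ, ((j:ℝ)+1)^2 * ((1/2:ℝ)^t)^(j+1) * uu (j+1)
      = (1/2:ℝ)^(t+1) * (((j:ℝ)+1)^2 * ((1/2:ℝ)^t)^j * uu j)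
        + ((j:ℝ)+1)^2 * ((1/2:ℝ)^(t+1))^(j+1) * uu (j+1) := by
    intro j
    have h := uu_rec' j
    calc ((j:ℝ)+1)^2 * ((1/2:ℝ)^t)^(j+1) * uu (j+1)
        = ((j:ℝ)+1)^2 * ((1/2:ℝ)^t)^(j+1) * ((1/2) * uu j + (1/2:ℝ)^(j+1) * uu (j+1)) := by
          rw [← h]
      _ = (1/2:ℝ)^(t+1) * (((j:ℝ)+1)^2 * ((1/2:ℝ)^t)^j * uu j)
          + ((j:ℝ)+1)^2 * (((1/2:ℝ)^t)^(j+1) * ((1/2:ℝ)^1)^(j+1)) * uu (j+1) := by ring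
      _ = _ := by rw [← mul_pow, pow_one, ← pow_succ]
  have hv := vv_summable t
  have hv1 := vv_summable (t+1)
  have hm := mm_summable t
  have hS := SS_summable t
  have hw : Summable (fun j : ℕ => ((j:ℝ)+1)^2 * ((1/2:ℝ)^t)^j * uu j) := by
    apply ((hv.add (hm.mul_left 2)).add hS).congr
    intro j; ring
  have hsum2 : Summable (fun j : ℕ => ((j:ℝ)+1)^2 * ((1/2:ℝ)^(t+1))^(j+1) * uu (j+1)) := by
    have := hv1.comp_injective (Nat.succ_injective)
    apply this.congr
    intro j
    show ((j+1:ℕ):ℝ)^2 * ((1/2:ℝ)^(t+1))^(j+1) * uu (j+1) = _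
    push_cast; ring
  have e1 : vv t = ∑' j : ℕ, ((j:ℝ)+1)^2 * ((1/2:ℝ)^t)^(j+1) * uu (j+1) := by
    rw [show vv t = ∑' j : ℕ, (j:ℝ)^2 * ((1/2:ℝ)^t)^j * uu j from rfl,
      tsum_shift _ hv (by norm_num)]
    apply tsum_congr; intro j; push_cast; ring
  have e2 : vv (t+1) = ∑' j : ℕ, ((j:ℝ)+1)^2 * ((1/2:ℝ)^(t+1))^(j+1) * uu (j+1) := by
    rw [show vv (t+1) = ∑' j : ℕ, (j:ℝ)^2 * ((1/2:ℝ)^(t+1))^j * uu j from rfl,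
      tsum_shift _ hv1 (by norm_num)]
    apply tsum_congr; intro j; push_cast; ring
  have e3 : (∑' j : ℕ, ((j:ℝ)+1)^2 * ((1/2:ℝ)^t)^(j+1) * uu (j+1))
      = (1/2:ℝ)^(t+1) * (vv t + 2 * mm t + SS t)
        + ∑' j : ℕ, ((j:ℝ)+1)^2 * ((1/2:ℝ)^(t+1))^(j+1) * uu (j+1) := by
    have hmid : (∑' j : ℕ, ((j:ℝ)+1)^2 * ((1/2:ℝ)^t)^j * uu j) = vv t + 2 * mm t + SS t := by
      rw [show vv t = ∑' j : ℕ, (j:ℝ)^2 * ((1/2:ℝ)^t)^j * uu j from rfl,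
        show mm t = ∑' j : ℕ, (j:ℝ) * ((1/2:ℝ)^t)^j * uu j from rfl,
        show SS t = ∑' j : ℕ, ((1/2:ℝ)^t)^j * uu j from rfl,
        ← tsum_mul_left (a := (2:ℝ)), ← Summable.tsum_add hv (hm.mul_left 2),
        ← Summable.tsum_add (hv.add (hm.mul_left 2)) hS]
      apply tsum_congr; intro j; ring
    rw [← hmid, ← tsum_mul_left, ← Summable.tsum_add (hw.mul_left _) hsum2]
    exact tsum_congr key
  have h4 := e1.trans e3
  rw [← e2] at h4
  exact h4

-- partial sums of uu
lemma sum_uu (J : ℕ) : ∑ j ∈ Finset.range (J+1), uu j = Qinf J := by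
  induction J with
  | zero => simp [uu]
  | succ J ih =>
    rw [Finset.sum_range_succ, ih]
    have h1 := Qinf_rec J
    have h2 := uu_rec' J
    unfold uu at *
    nlinarith [h2]

lemma uu_summable : Summable uu := by
  have := uu_summable_weight 0 1 zero_le_one le_rfl
  simpa using this

lemma tsum_uu : ∑' j, uu j = 1 := by
  have h1 : Tendsto (fun J => ∑ j ∈ Finset.range (J+1), uu j) atTop (nhds 1) := by
    have hq : Tendsto Qinf atTop (nhds 1) := by
      have hup : Tendsto (fun J : ℕ => 1 - (1/2:ℝ)^J) atTop (nhds 1) := by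
        have := tendsto_pow_atTop_nhds_zero_of_lt_one
          (by norm_num : (0:ℝ) ≤ 1/2) (by norm_num : (1/2:ℝ) < 1)
        have := (tendsto_const_nhds (x := (1:ℝ)) (f := atTop (α := ℕ))).sub this
        simpa using this
      exact tendsto_of_tendsto_of_tendsto_of_le_of_le hup tendsto_const_nhds
        (fun J => Qinf_ge J) (fun J => Qinf_le_one J)
    exact (funext sum_uu ▸ hq : _)
  have h2 : Tendsto (fun J => ∑ j ∈ Finset.range (J+1), uu j) atTop (nhds (∑' j, uu j)) := by
    have := uu_summable.hasSum.tendsto_sum_nat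
    exact this.comp (tendsto_add_atTop_nat 1)
  exact tendsto_nhds_unique h2 h1

lemma SS_zero : SS 0 = 1 := by
  rw [show SS 0 = ∑' j : ℕ, ((1/2:ℝ)^0)^j * uu j from rfl]
  rw [← tsum_uu]
  apply tsum_congr; intro j; norm_num

lemma uu0_le_SS (t : ℕ) : uu 0 ≤ SS t := by
  have h := Summable.le_tsum (SS_summable t) 0 (fun j _ => by
    have := (uu_pos j).le
    positivity)
  rw [pow_zero, one_mul] at h
  exact h

lemma SS_pos (t : ℕ) : 0 < SS t := lt_of_lt_of_le (uu_pos 0) (uu0_le_SS t)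

lemma mm_nonneg (t : ℕ) : 0 ≤ mm t :=
  tsum_nonneg (fun j => by have := (uu_pos j).le; positivity)

lemma vv_nonneg (t : ℕ) : 0 ≤ vv t :=
  tsum_nonneg (fun j => by have := (uu_pos j).le; positivity)

noncomputable def K₁ : ℝ := ∑' j : ℕ, (j:ℝ) * (1/4:ℝ)^j
noncomputable def K₂ : ℝ := ∑' j : ℕ, (j:ℝ)^2 * (1/4:ℝ)^j

lemma pow_weight_bound (s t : ℕ) (hs : s ≠ 0) (j : ℕ) :
    (j:ℝ)^s * ((1/2:ℝ)^(t+1))^j * uu j ≤ (1/2:ℝ)^t * ((j:ℝ)^s * (1/4:ℝ)^j) := by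
  rcases Nat.eq_zero_or_pos j with rfl | hj
  · norm_num [zero_pow hs]
  · have h1 : uu j ≤ (1/2:ℝ)^j := uu_le j
    have h2 : ((1/2:ℝ)^(t+1))^j * (1/2)^j = (1/4:ℝ)^j * ((1/2:ℝ)^t)^j := by
      rw [← mul_pow, ← mul_pow]; congr 1; ring
    have h3 : ((1/2:ℝ)^t)^j ≤ (1/2:ℝ)^t := by
      rw [← pow_mul]
      apply pow_le_pow_of_le_one (by norm_num) (by norm_num)
      nlinarith [Nat.one_le_iff_ne_zero.mpr (by omega : j ≠ 0)]
    have h4 : (0:ℝ) ≤ (j:ℝ)^s := by positivity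
    have h5 : (0:ℝ) ≤ ((1/2:ℝ)^(t+1))^j := by positivity
    have h6 : (0:ℝ) < uu j := uu_pos j
    calc (j:ℝ)^s * ((1/2:ℝ)^(t+1))^j * uu j
        ≤ (j:ℝ)^s * ((1/2:ℝ)^(t+1))^j * (1/2:ℝ)^j := by
          rw [mul_assoc, mul_assoc]
          exact mul_le_mul_of_nonneg_left
            (mul_le_mul_of_nonneg_left h1 h5) h4
      _ = (j:ℝ)^s * ((1/4:ℝ)^j * ((1/2:ℝ)^t)^j) := by rw [mul_assoc, h2]
      _ ≤ (j:ℝ)^s * ((1/4:ℝ)^j * (1/2:ℝ)^t) := by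
          have h7 : (0:ℝ) < (1/4:ℝ)^j := by positivity
          exact mul_le_mul_of_nonneg_left
            (mul_le_mul_of_nonneg_left h3 h7.le) h4
      _ = (1/2:ℝ)^t * ((j:ℝ)^s * (1/4:ℝ)^j) := by ring

lemma summable_K₁ : Summable (fun j : ℕ => (j:ℝ) * (1/4:ℝ)^j) := by
  have := summable_pow_mul_half (s := 1) (r := (1/4:ℝ)) (by norm_num) (by norm_num)
  simpa using this

lemma summable_K₂ : Summable (fun j : ℕ => (j:ℝ)^2 * (1/4:ℝ)^j) := by
  exact summable_pow_mul_half (by norm_num) (by norm_num)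

lemma mm_le (t : ℕ) : mm (t+1) ≤ (1/2:ℝ)^t * K₁ := by
  rw [show mm (t+1) = ∑' j : ℕ, (j:ℝ) * ((1/2:ℝ)^(t+1))^j * uu j from rfl,
    show (1/2:ℝ)^t * K₁ = ∑' j : ℕ, (1/2:ℝ)^t * ((j:ℝ) * (1/4:ℝ)^j) from
      (tsum_mul_left).symm]
  apply Summable.tsum_le_tsum _ (mm_summable (t+1)) (summable_K₁.mul_left _)
  intro j
  have := pow_weight_bound 1 t one_ne_zero j
  simpa using this

lemma vv_le (t : ℕ) : vv (t+1) ≤ (1/2:ℝ)^t * K₂ := by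
  rw [show vv (t+1) = ∑' j : ℕ, (j:ℝ)^2 * ((1/2:ℝ)^(t+1))^j * uu j from rfl,
    show (1/2:ℝ)^t * K₂ = ∑' j : ℕ, (1/2:ℝ)^t * ((j:ℝ)^2 * (1/4:ℝ)^j) from
      (tsum_mul_left).symm]
  exact Summable.tsum_le_tsum (fun j => pow_weight_bound 2 t two_ne_zero j) (vv_summable (t+1))
    (summable_K₂.mul_left _)

lemma tendsto_halfpow_mul (c : ℝ) : Tendsto (fun t : ℕ => (1/2:ℝ)^t * c) atTop (nhds 0) := by
  have := tendsto_pow_atTop_nhds_zero_of_lt_one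
    (by norm_num : (0:ℝ) ≤ 1/2) (by norm_num : (1/2:ℝ) < 1)
  have := this.mul_const c
  simpa using this

lemma mm_tendsto : Tendsto mm atTop (nhds 0) := by
  rw [← tendsto_add_atTop_iff_nat 1]
  exact squeeze_zero (fun t => mm_nonneg (t+1)) (fun t => mm_le t) (tendsto_halfpow_mul K₁)

lemma vv_tendsto : Tendsto vv atTop (nhds 0) := by
  rw [← tendsto_add_atTop_iff_nat 1]
  exact squeeze_zero (fun t => vv_nonneg (t+1)) (fun t => vv_le t) (tendsto_halfpow_mul K₂)


noncomputable def ee (s : ℕ) : ℝ := 1 / ((2:ℝ)^(s+1) - 1)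

lemma two_pow_sub_one_pos (s : ℕ) : (0:ℝ) < (2:ℝ)^(s+1) - 1 := by
  have : (2:ℝ)^1 ≤ (2:ℝ)^(s+1) := pow_le_pow_right₀ (by norm_num) (by omega)
  norm_num at this ⊢; linarith

lemma ee_pos (s : ℕ) : 0 < ee s := by
  have := two_pow_sub_one_pos s
  unfold ee; positivity

lemma ee_le (s : ℕ) : ee s ≤ (1/2:ℝ)^s := by
  have h := two_pow_sub_one_pos s
  have h2 : (0:ℝ) < (2:ℝ)^s := by positivity
  rw [ee, div_le_iff₀ h]
  have h3 : (2:ℝ)^(s+1) = 2 * 2^s := by ring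
  have h4 : (1/2:ℝ)^s * (2:ℝ)^s = 1 := by
    rw [← mul_pow]; norm_num
  have h5 : (1:ℝ) ≤ (2:ℝ)^s := one_le_pow₀ (by norm_num)
  have h6 : (0:ℝ) < (1/2:ℝ)^s := half_pow_pos
  nlinarith

lemma summable_ee : Summable ee :=
  Summable.of_nonneg_of_le (fun s => (ee_pos s).le) ee_le
    (summable_geometric_of_lt_one (by norm_num) (by norm_num))

lemma summable_ee_sq : Summable (fun s => ee s ^ 2) := by
  apply Summable.of_nonneg_of_le (fun s => by positivity)
    (fun s => ?_) summable_ee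
  have h1 := ee_pos s
  have h2 : ee s ≤ 1 := by
    have := ee_le s
    have := half_pow_le_one (j := s)
    linarith
  nlinarith

lemma tsum_ee : ∑' s, ee s = c₀ := by rfl

lemma tsum_ee_sq : ∑' s, ee s ^ 2 = c₁ := by
  unfold c₁ ee
  apply tsum_congr; intro s
  rw [div_pow]; norm_num

noncomputable def tau (s : ℕ) : ℝ := ∑' i : ℕ, ee (i + s)

lemma tau_zero : tau 0 = c₀ := by
  unfold tau; rw [← tsum_ee]; rfl

lemma tau_succ (s : ℕ) : tau s = ee s + tau (s+1) := by
  unfold tau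
  have hsum : Summable (fun i => ee (i + s)) := by
    exact (summable_nat_add_iff s).mpr summable_ee
  rw [Summable.tsum_eq_zero_add hsum]
  simp only [zero_add]
  congr 1
  apply tsum_congr; intro i
  congr 1; omega

lemma tau_tendsto : Tendsto tau atTop (nhds 0) := tendsto_sum_nat_add ee

lemma tau_eq (t : ℕ) : ∑ s ∈ Finset.range t, ee s + tau t = c₀ := by
  rw [← tsum_ee, tau]
  exact Summable.sum_add_tsum_nat_add t summable_ee

lemma tau_nonneg (s : ℕ) : 0 ≤ tau s := tsum_nonneg (fun i => (ee_pos _).le)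

-- mu and nu
noncomputable def mu (t : ℕ) : ℝ := mm t / SS t
noncomputable def nu (t : ℕ) : ℝ := vv t / SS t

lemma ee_eq (t : ℕ) : (1/2:ℝ)^(t+1) / (1 - (1/2:ℝ)^(t+1)) = ee t := by
  have h1 : ((2:ℝ))^(t+1) ≠ 0 := by positivity
  have h2 := two_pow_sub_one_pos t
  rw [ee]
  rw [div_eq_div_iff (by
      have : ((1/2:ℝ))^(t+1) < 1 := half_pow_lt_one (by omega)
      linarith) (by linarith)]
  have h3 : (1/2:ℝ)^(t+1) * (2:ℝ)^(t+1) = 1 := by rw [← mul_pow]; norm_num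
  nlinarith

lemma one_sub_half_pow_pos (t : ℕ) : (0:ℝ) < 1 - (1/2:ℝ)^(t+1) := by
  have : ((1/2:ℝ))^(t+1) < 1 := half_pow_lt_one (by omega)
  linarith

lemma mu_rec (t : ℕ) : mu (t+1) = mu t - ee t := by
  have hS := (SS_pos t).ne'
  have hα := (one_sub_half_pow_pos t).ne'
  have hmm1 : mm (t+1) = (1 - (1/2:ℝ)^(t+1)) * mm t - (1/2:ℝ)^(t+1) * SS t := by
    linarith [mm_rec t]
  rw [mu, mu, ← ee_eq t, SS_rec t, hmm1]
  set α := (1/2:ℝ)^(t+1) with hαdef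
  field_simp

lemma nu_rec (t : ℕ) : nu (t+1) = nu t - ee t * (2 * mu t + 1) := by
  have hS := SS_pos t
  have hS1 := SS_pos (t+1)
  have hα := one_sub_half_pow_pos t
  have hrec := SS_rec t
  have hS' := (SS_pos t).ne'
  have hα' := (one_sub_half_pow_pos t).ne'
  have hvv1 : vv (t+1) = (1 - (1/2:ℝ)^(t+1)) * vv t
      - (1/2:ℝ)^(t+1) * (2 * mm t + SS t) := by
    linarith [vv_rec t]
  rw [nu, nu, mu, ← ee_eq t, SS_rec t, hvv1]
  set α := (1/2:ℝ)^(t+1) with hαdef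
  field_simp

lemma mu_nonneg (t : ℕ) : 0 ≤ mu t := div_nonneg (mm_nonneg t) (SS_pos t).le
lemma nu_nonneg (t : ℕ) : 0 ≤ nu t := div_nonneg (vv_nonneg t) (SS_pos t).le

lemma mu_tendsto : Tendsto mu atTop (nhds 0) := by
  apply squeeze_zero mu_nonneg (g := fun t => mm t * (uu 0)⁻¹)
  · intro t
    rw [mu, div_eq_mul_inv]
    apply mul_le_mul_of_nonneg_left _ (mm_nonneg t)
    exact inv_anti₀ (uu_pos 0) (uu0_le_SS t)
  · simpa using mm_tendsto.mul_const (uu 0)⁻¹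

lemma nu_tendsto : Tendsto nu atTop (nhds 0) := by
  apply squeeze_zero nu_nonneg (g := fun t => vv t * (uu 0)⁻¹)
  · intro t
    rw [nu, div_eq_mul_inv]
    apply mul_le_mul_of_nonneg_left _ (vv_nonneg t)
    exact inv_anti₀ (uu_pos 0) (uu0_le_SS t)
  · simpa using vv_tendsto.mul_const (uu 0)⁻¹

lemma mu_partial (t : ℕ) : mu 0 - mu t = ∑ s ∈ Finset.range t, ee s := by
  induction t with
  | zero => simp
  | succ t ih =>
    rw [Finset.sum_range_succ, ← ih, mu_rec t]
    ring

lemma mu_zero_eq : mu 0 = c₀ := by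
  have h1 : Tendsto (fun t => mu 0 - mu t) atTop (nhds (mu 0)) := by
    simpa using (tendsto_const_nhds (x := mu 0) (f := atTop (α := ℕ))).sub mu_tendsto
  have h2 : Tendsto (fun t => ∑ s ∈ Finset.range t, ee s) atTop (nhds c₀) := by
    rw [← tsum_ee]
    exact summable_ee.hasSum.tendsto_sum_nat
  exact tendsto_nhds_unique ((funext mu_partial) ▸ h1) h2

lemma mm_zero_eq : mm 0 = c₀ := by
  have := mu_zero_eq
  rw [mu, SS_zero, div_one] at this
  exact this

lemma mu_eq_tau (t : ℕ) : mu t = tau t := by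
  have h1 := mu_partial t
  have h2 := tau_eq t
  have := mu_zero_eq
  linarith

lemma nu_partial (t : ℕ) :
    nu 0 - nu t = ∑ s ∈ Finset.range t, ee s * (2 * tau s + 1) := by
  induction t with
  | zero => simp
  | succ t ih =>
    rw [Finset.sum_range_succ, ← ih, nu_rec t, mu_eq_tau t]
    ring

lemma sum_ee_tau (t : ℕ) : ∑ s ∈ Finset.range t, ee s * (2 * tau s + 1)
    = (tau 0 ^ 2 - tau t ^ 2) + ∑ s ∈ Finset.range t, ee s ^ 2
      + ∑ s ∈ Finset.range t, ee s := by
  induction t with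
  | zero => simp
  | succ t ih =>
    rw [Finset.sum_range_succ, ih, Finset.sum_range_succ, Finset.sum_range_succ]
    have h := tau_succ t
    have : tau (t+1) = tau t - ee t := by linarith
    rw [this]
    ring

lemma nu_zero_eq : nu 0 = c₀ ^ 2 + c₁ + c₀ := by
  have h1 : Tendsto (fun t => nu 0 - nu t) atTop (nhds (nu 0)) := by
    simpa using (tendsto_const_nhds (x := nu 0) (f := atTop (α := ℕ))).sub nu_tendsto
  have h2 : Tendsto (fun t => ∑ s ∈ Finset.range t, ee s * (2 * tau s + 1)) atTop
      (nhds (c₀ ^ 2 + c₁ + c₀)) := by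
    have ha : Tendsto (fun t => tau 0 ^ 2 - tau t ^ 2) atTop (nhds (c₀ ^ 2)) := by
      have := ((tau_tendsto.mul tau_tendsto)).const_sub (tau 0 ^ 2)
      have h3 : Tendsto (fun t => tau 0 ^ 2 - tau t ^ 2) atTop (nhds (tau 0 ^ 2 - 0 * 0)) := by
        simpa [pow_two] using this
      rw [tau_zero] at h3
      simpa [tau_zero] using h3
    have hb : Tendsto (fun t => ∑ s ∈ Finset.range t, ee s ^ 2) atTop (nhds c₁) := by
      rw [← tsum_ee_sq]
      exact summable_ee_sq.hasSum.tendsto_sum_nat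
    have hc : Tendsto (fun t => ∑ s ∈ Finset.range t, ee s) atTop (nhds c₀) := by
      rw [← tsum_ee]
      exact summable_ee.hasSum.tendsto_sum_nat
    have := (ha.add hb).add hc
    apply Tendsto.congr _ this
    intro t
    rw [sum_ee_tau t]
  exact tendsto_nhds_unique ((funext nu_partial) ▸ h1) h2

lemma vv_zero_eq : vv 0 = c₀ ^ 2 + c₁ + c₀ := by
  have := nu_zero_eq
  rw [nu, SS_zero, div_one] at this
  exact this

-- Part 1: finite approximation
lemma p_sub_u_nonneg {i d : ℕ} (h : i ≤ d) :
    0 ≤ (1/2:ℝ)^i * Pd i d - uu i := by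
  rw [uu, Qinf_mul h]
  have h1 := Pd_pos i d
  have h2 := Qinf_le_one d
  have h3 := (Qinf_pos d).le
  have h4 : (0:ℝ) < (1/2:ℝ)^i := half_pow_pos
  nlinarith [mul_nonneg (mul_nonneg h4.le h1.le) (sub_nonneg.2 h2)]

lemma p_sub_u_le {i d : ℕ} (h : i ≤ d) :
    (1/2:ℝ)^i * Pd i d - uu i ≤ (1/2:ℝ)^i * (1/2:ℝ)^d := by
  rw [uu, Qinf_mul h]
  have h1 := Pd_pos i d
  have h2 := Pd_le_one i d
  have h3 : 1 - (1/2:ℝ)^d ≤ Qinf d := Qinf_ge d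
  have h4 : (0:ℝ) < (1/2:ℝ)^i := half_pow_pos
  have h5 : (0:ℝ) < (1/2:ℝ)^d := half_pow_pos
  have h6 : 0 ≤ 1 - Qinf d := by linarith [Qinf_le_one d]
  have h7 : Pd i d * (1 - Qinf d) ≤ (1/2:ℝ)^d := by nlinarith
  nlinarith [mul_le_mul_of_nonneg_left h7 h4.le]

lemma summable_wsq : Summable (fun i : ℕ => ((i:ℝ)+1)^2 * (1/2:ℝ)^i) := by
  have h0 := summable_pow_mul_half (s := 0) (r := (1/2:ℝ)) (by norm_num) (by norm_num)
  have h1 := summable_pow_mul_half (s := 1) (r := (1/2:ℝ)) (by norm_num) (by norm_num)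
  have h2 := summable_pow_mul_half (s := 2) (r := (1/2:ℝ)) (by norm_num) (by norm_num)
  apply ((h2.add (h1.mul_left 2)).add h0).congr
  intro i; simp; ring

noncomputable def KK : ℝ := ∑' i : ℕ, ((i:ℝ)+1)^2 * (1/2:ℝ)^i

lemma KK_nonneg : 0 ≤ KK := tsum_nonneg (fun i => by positivity)

lemma tendsto_weighted (w : ℕ → ℝ) (C : ℝ) (hC : 0 ≤ C) (hw0 : ∀ i, 0 ≤ w i)
    (hwb : ∀ i, w i ≤ C * ((i:ℝ)+1)^2) :
    Tendsto (fun d => ∑ i ∈ Finset.range (d+1), w i * ((1/2:ℝ)^i * Pd i d)) atTop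
      (nhds (∑' i, w i * uu i)) := by
  have hwu : Summable (fun i => w i * uu i) := by
    apply Summable.of_nonneg_of_le (f := fun i : ℕ => C * (((i:ℝ)+1)^2 * (1/2:ℝ)^i))
    · intro i; exact mul_nonneg (hw0 i) (uu_pos i).le
    · intro i
      have h1 := uu_le i
      have h2 := (uu_pos i).le
      have h3 := hwb i
      have h4 := hw0 i
      have h5 : (0:ℝ) < (1/2:ℝ)^i := half_pow_pos
      calc w i * uu i ≤ w i * (1/2:ℝ)^i := by nlinarith
        _ ≤ C * ((i:ℝ)+1)^2 * (1/2:ℝ)^i := by nlinarith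
        _ = C * (((i:ℝ)+1)^2 * (1/2:ℝ)^i) := by ring
    · exact summable_wsq.mul_left C
  have key : ∀ d, ∑ i ∈ Finset.range (d+1), w i * ((1/2:ℝ)^i * Pd i d)
      = (∑' i, w i * uu i)
        + (∑ i ∈ Finset.range (d+1), w i * ((1/2:ℝ)^i * Pd i d - uu i)
           - ∑' i, w (i + (d+1)) * uu (i + (d+1))) := by
    intro d
    have hsplit := Summable.sum_add_tsum_nat_add (d+1) hwu
    have : ∑ i ∈ Finset.range (d+1), w i * ((1/2:ℝ)^i * Pd i d)
        = ∑ i ∈ Finset.range (d+1), w i * uu i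
          + ∑ i ∈ Finset.range (d+1), w i * ((1/2:ℝ)^i * Pd i d - uu i) := by
      rw [← Finset.sum_add_distrib]
      apply Finset.sum_congr rfl; intro i _; ring
    rw [this]
    linarith
  have hB : Tendsto (fun d => ∑ i ∈ Finset.range (d+1), w i * ((1/2:ℝ)^i * Pd i d - uu i))
      atTop (nhds 0) := by
    apply squeeze_zero (g := fun d => (1/2:ℝ)^d * (C * KK))
    · intro d
      apply Finset.sum_nonneg
      intro i hi
      simp only [Finset.mem_range] at hi
      exact mul_nonneg (hw0 i) (p_sub_u_nonneg (by omega))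
    · intro d
      calc ∑ i ∈ Finset.range (d+1), w i * ((1/2:ℝ)^i * Pd i d - uu i)
          ≤ ∑ i ∈ Finset.range (d+1), (1/2:ℝ)^d * (C * (((i:ℝ)+1)^2 * (1/2:ℝ)^i)) := by
            apply Finset.sum_le_sum
            intro i hi
            simp only [Finset.mem_range] at hi
            have h1 := p_sub_u_nonneg (i := i) (d := d) (by omega)
            have h2 := p_sub_u_le (i := i) (d := d) (by omega)
            have h3 := hw0 i
            have h4 := hwb i
            have h5 : (0:ℝ) < (1/2:ℝ)^i := half_pow_pos
            have h6 : (0:ℝ) < (1/2:ℝ)^d := half_pow_pos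
            calc w i * ((1/2:ℝ)^i * Pd i d - uu i)
                ≤ (C * ((i:ℝ)+1)^2) * ((1/2:ℝ)^i * (1/2:ℝ)^d) := by nlinarith
              _ = (1/2:ℝ)^d * (C * (((i:ℝ)+1)^2 * (1/2:ℝ)^i)) := by ring
        _ = (1/2:ℝ)^d * (C * ∑ i ∈ Finset.range (d+1), (((i:ℝ)+1)^2 * (1/2:ℝ)^i)) := by
            rw [Finset.mul_sum, Finset.mul_sum]
        _ ≤ (1/2:ℝ)^d * (C * KK) := by
            have h6 : (0:ℝ) < (1/2:ℝ)^d := half_pow_pos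
            have h7 : ∑ i ∈ Finset.range (d+1), (((i:ℝ)+1)^2 * (1/2:ℝ)^i) ≤ KK := by
              apply Summable.sum_le_tsum
              · intro i _; positivity
              · exact summable_wsq
            exact mul_le_mul_of_nonneg_left
              (mul_le_mul_of_nonneg_left h7 hC) h6.le
    · exact tendsto_halfpow_mul (C * KK)
  have hT : Tendsto (fun d => ∑' i, w (i + (d+1)) * uu (i + (d+1))) atTop (nhds 0) := by
    have := tendsto_sum_nat_add (fun i => w i * uu i)
    exact this.comp (tendsto_add_atTop_nat 1)
  have h3 := hB.sub hT
  rw [sub_zero] at h3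
  have h2 := (tendsto_const_nhds (x := ∑' i, w i * uu i) (f := atTop (α := ℕ))).add h3
  rw [add_zero] at h2
  exact Tendsto.congr (fun d => (key d).symm) h2


lemma Pd_def (i d : ℕ) : Pd i d = ∏ j ∈ Finset.Icc (i+1) d, (1 - (1/2:ℝ)^j) := rfl

lemma zpow_neg_eq (i : ℕ) : (2:ℝ)^(-(i:ℤ)) = (1/2:ℝ)^i := by
  rw [zpow_neg, zpow_natCast, ← inv_pow, one_div]

lemma E1_eq (k d : ℕ) :
    E₁ k d = ∑ i ∈ Finset.range (d+1), ((k:ℝ)+(i:ℝ)) * ((1/2:ℝ)^i * Pd i d) := by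
  unfold E₁
  apply Finset.sum_congr rfl
  intro i _
  rw [Pd_def, mul_assoc]
  congr 2
  · exact zpow_neg_eq i
  · apply Finset.prod_congr rfl
    intro j _
    rw [zpow_neg_eq j]

lemma E2_eq (k d : ℕ) :
    E₂ k d = ∑ i ∈ Finset.range (d+1), ((k:ℝ)+(i:ℝ))^2 * ((1/2:ℝ)^i * Pd i d) := by
  unfold E₂
  apply Finset.sum_congr rfl
  intro i _
  rw [Pd_def, mul_assoc]
  congr 2
  · exact zpow_neg_eq i
  · apply Finset.prod_congr rfl
    intro j _
    rw [zpow_neg_eq j]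

lemma summable_i_uu : Summable (fun i : ℕ => (i:ℝ) * uu i) := by
  have := uu_summable_weight 1 1 zero_le_one le_rfl
  apply this.congr; intro i; simp

lemma summable_isq_uu : Summable (fun i : ℕ => (i:ℝ)^2 * uu i) := by
  have := uu_summable_weight 2 1 zero_le_one le_rfl
  apply this.congr; intro i; simp

lemma tsum_i_uu : ∑' i : ℕ, (i:ℝ) * uu i = c₀ := by
  rw [← mm_zero_eq]
  rw [show mm 0 = ∑' j : ℕ, (j:ℝ) * ((1/2:ℝ)^0)^j * uu j from rfl]
  apply tsum_congr; intro j; norm_num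

lemma tsum_isq_uu : ∑' i : ℕ, (i:ℝ)^2 * uu i = c₀ ^ 2 + c₁ + c₀ := by
  rw [← vv_zero_eq]
  rw [show vv 0 = ∑' j : ℕ, (j:ℝ)^2 * ((1/2:ℝ)^0)^j * uu j from rfl]
  apply tsum_congr; intro j; norm_num

lemma tendsto_E1 (k : ℕ) : Tendsto (fun d => E₁ k d) atTop (nhds ((k:ℝ) + c₀)) := by
  have h := tendsto_weighted (fun i => (k:ℝ)+(i:ℝ)) (((k:ℝ)+1)^2)
    (by positivity)
    (fun i => by positivity)
    (fun i => by
      show (k:ℝ)+(i:ℝ) ≤ ((k:ℝ)+1)^2 * ((i:ℝ)+1)^2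
      have h1 : (0:ℝ) ≤ (k:ℝ) := Nat.cast_nonneg k
      have h2 : (0:ℝ) ≤ (i:ℝ) := Nat.cast_nonneg i
      have h3 : (k:ℝ)+(i:ℝ) ≤ ((k:ℝ)+1) * ((i:ℝ)+1) := by nlinarith
      have h4 : (1:ℝ) ≤ ((k:ℝ)+1) * ((i:ℝ)+1) := by nlinarith
      have h5 : ((k:ℝ)+1)^2 * ((i:ℝ)+1)^2 = (((k:ℝ)+1) * ((i:ℝ)+1))^2 := by ring
      nlinarith)
  have heq : ∑' i : ℕ, ((k:ℝ)+(i:ℝ)) * uu i = (k:ℝ) + c₀ := by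
    rw [show (fun i : ℕ => ((k:ℝ)+(i:ℝ)) * uu i)
        = (fun i : ℕ => (k:ℝ) * uu i + (i:ℝ) * uu i) from funext (fun i => by ring),
      Summable.tsum_add (uu_summable.mul_left _) summable_i_uu, tsum_mul_left, tsum_uu, tsum_i_uu,
      mul_one]
  rw [heq] at h
  apply Tendsto.congr _ h
  intro d
  rw [E1_eq]

lemma tendsto_E2 (k : ℕ) : Tendsto (fun d => E₂ k d) atTop
    (nhds ((k:ℝ)^2 + 2*k*c₀ + (c₀ ^ 2 + c₁ + c₀))) := by
  have h := tendsto_weighted (fun i => ((k:ℝ)+(i:ℝ))^2) (((k:ℝ)+1)^2)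
    (by positivity)
    (fun i => by positivity)
    (fun i => by
      show ((k:ℝ)+(i:ℝ))^2 ≤ ((k:ℝ)+1)^2 * ((i:ℝ)+1)^2
      have h1 : (0:ℝ) ≤ (k:ℝ) := Nat.cast_nonneg k
      have h2 : (0:ℝ) ≤ (i:ℝ) := Nat.cast_nonneg i
      have h3 : (k:ℝ)+(i:ℝ) ≤ ((k:ℝ)+1) * ((i:ℝ)+1) := by nlinarith
      have h5 : ((k:ℝ)+1)^2 * ((i:ℝ)+1)^2 = (((k:ℝ)+1) * ((i:ℝ)+1))^2 := by ring
      rw [h5]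
      apply pow_le_pow_left₀ (by linarith) h3)
  have heq : ∑' i : ℕ, ((k:ℝ)+(i:ℝ))^2 * uu i
      = (k:ℝ)^2 + 2*k*c₀ + (c₀ ^ 2 + c₁ + c₀) := by
    rw [show (fun i : ℕ => ((k:ℝ)+(i:ℝ))^2 * uu i)
        = (fun i : ℕ => ((k:ℝ)^2 * uu i + (2*(k:ℝ)) * ((i:ℝ) * uu i)) + (i:ℝ)^2 * uu i)
        from funext (fun i => by ring),
      Summable.tsum_add ((uu_summable.mul_left _).add (summable_i_uu.mul_left _)) summable_isq_uu,
      Summable.tsum_add (uu_summable.mul_left _) (summable_i_uu.mul_left _),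
      tsum_mul_left, tsum_mul_left, tsum_uu, tsum_i_uu, tsum_isq_uu, mul_one]
  rw [heq] at h
  apply Tendsto.congr _ h
  intro d
  rw [E2_eq]

/-- `lim_{d→∞} (E₂(d) − E₁(d)²) = c₀ + c₁`: the limiting variance of the decoding
time of a random binary linear code. -/
theorem variance_decoding_time_limit (k : ℕ) :
    Tendsto (fun d : ℕ => E₂ k d - (E₁ k d) ^ 2) atTop (nhds (c₀ + c₁)) := by
  have h := (tendsto_E2 k).sub ((tendsto_E1 k).pow 2)
  have : (k:ℝ)^2 + 2*k*c₀ + (c₀ ^ 2 + c₁ + c₀) - ((k:ℝ) + c₀)^2 = c₀ + c₁ := by ring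
  rwa [this] at h
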